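/- For 0 < p ≤ 1, p < q ≤ ∞, and m < N, the Gelfand width satisfies d^m(B_p^N, ℓ_q^N) ≥ (1/(m+1))^{1/p - 1/q}. -/

import Mathlib

/-- The ℓp (quasi-)norm on ℝ^N: `(∑ |x ℓ|^p)^(1/p)`. -/
noncomputable def pnorm (p : ℝ) {N : ℕ} (x : Fin N → ℝ) : ℝ :=
  (∑ i, |x i| ^ p) ^ (1 / p)

/-- The ℓq (quasi-)norm on ℝ^N, allowing `q = ∞`. -/
noncomputable def lpnorm (q : ENNReal) {N : ℕ} (x : Fin N → ℝ) : ℝ :=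
  if q = ⊤ then ⨆ i, |x i| else (∑ i, |x i| ^ q.toReal) ^ (1 / q.toReal)

/-- The Gelfand width `d^m(K, X) = inf_A sup {‖v‖_X : v ∈ K ∩ ker A}`. -/
noncomputable def gelfandWidth (m : ℕ) {N : ℕ} (K : Set (Fin N → ℝ))
    (nrm : (Fin N → ℝ) → ℝ) : ℝ :=
  ⨅ A : Matrix (Fin m) (Fin N) ℝ,
    sSup (nrm '' {v | v ∈ K ∧ Matrix.mulVec A v = 0})

section aux

variable {N m : ℕ}

/-- Extension by zero, as a linear map. -/
noncomputable def extZero (h : m + 1 ≤ N) : (Fin (m+1) → ℝ) →ₗ[ℝ] (Fin N → ℝ) where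
  toFun y := fun i => if hi : (i : ℕ) < m + 1 then y ⟨i, hi⟩ else 0
  map_add' a b := by funext i; by_cases hi : (i : ℕ) ≤ m <;> simp [hi]
  map_smul' c a := by funext i; by_cases hi : (i : ℕ) ≤ m <;> simp [hi]

lemma sum_extZero (h : m + 1 ≤ N) (g : ℝ → ℝ) (hg : g 0 = 0) (y : Fin (m+1) → ℝ) :
    ∑ i : Fin N, g (extZero h y i) = ∑ j : Fin (m+1), g (y j) := by
  calc ∑ i : Fin N, g (extZero h y i)
      = ∑ k ∈ Finset.range N, g (if hk : k < m + 1 then y ⟨k, hk⟩ else 0) :=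
        Fin.sum_univ_eq_sum_range (fun k => g (if hk : k < m + 1 then y ⟨k, hk⟩ else 0)) N
    _ = ∑ k ∈ Finset.range (m+1), g (if hk : k < m + 1 then y ⟨k, hk⟩ else 0) :=
        (Finset.sum_subset (Finset.range_subset_range.2 h)
          (by intro k _ hk; rw [Finset.mem_range] at hk; rw [dif_neg hk, hg])).symm
    _ = ∑ j : Fin (m+1), g (y j) := by
        rw [← Fin.sum_univ_eq_sum_range (fun k => g (if hk : k < m + 1 then y ⟨k, hk⟩ else 0))]
        exact Finset.sum_congr rfl (fun j _ => by rw [dif_pos j.isLt])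

lemma exists_kernel_vec (h : m + 1 ≤ N) (A : Matrix (Fin m) (Fin N) ℝ) :
    ∃ y : Fin (m+1) → ℝ, y ≠ 0 ∧ A.mulVec (extZero h y) = 0 := by
  have hni : ¬ Function.Injective (A.mulVecLin.comp (extZero h)) := by
    intro hinj
    have := LinearMap.finrank_le_finrank_of_injective hinj
    simp only [Module.finrank_fin_fun] at this
    omega
  rw [injective_iff_map_eq_zero'] at hni
  push_neg at hni
  obtain ⟨y, hy⟩ := hni
  rcases hy with ⟨h1, h2⟩ | ⟨h1, h2⟩
  · exact ⟨y, h2, h1⟩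
  · exact absurd (by rw [h2]; simp) h1

end aux

/-- For `0 < p ≤ 1`, `p < q ≤ ∞`, and `m < N`:
`d^m(B_p^N, ℓ_q^N) ≥ (1/(m+1))^{1/p - 1/q}`. -/
theorem gelfandWidth_simple_lower_bound (p : ℝ) (hp0 : 0 < p) (hp1 : p ≤ 1)
    (q : ENNReal) (hq : ENNReal.ofReal p < q) (N m : ℕ) (hm : m < N) :
    (1 / ((m : ℝ) + 1)) ^ (1 / p - (q⁻¹).toReal) ≤
      gelfandWidth m {x : Fin N → ℝ | pnorm p x ≤ 1} (lpnorm q) := by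
  have hmN : m + 1 ≤ N := hm
  have hp : p ≠ 0 := ne_of_gt hp0
  have hM0 : (0:ℝ) < (m:ℝ) + 1 := by positivity
  haveI : Nonempty (Fin N) := ⟨⟨0, Nat.lt_of_le_of_lt (Nat.zero_le m) hm⟩⟩
  -- every x in the unit p-ball has coordinates bounded by 1
  have habs : ∀ x : Fin N → ℝ, pnorm p x ≤ 1 → ∀ i, |x i| ≤ 1 := by
    intro x hx i
    have hsum : ∑ i, |x i| ^ p ≤ 1 := by
      by_contra hc
      push_neg at hc
      have : (1:ℝ) < (∑ i, |x i| ^ p) ^ (1/p) :=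
        (Real.one_lt_rpow_iff_of_pos (lt_trans one_pos hc)).2
          (Or.inl ⟨hc, by positivity⟩)
      exact absurd hx (not_le.2 this)
    have h1 : |x i| ^ p ≤ 1 :=
      le_trans (Finset.single_le_sum (f := fun j => |x j| ^ p)
        (fun j _ => Real.rpow_nonneg (abs_nonneg _) p) (Finset.mem_univ i)) hsum
    by_contra hc
    push_neg at hc
    exact absurd h1 (not_le.2 ((Real.one_lt_rpow_iff_of_pos (lt_trans one_pos hc)).2
      (Or.inl ⟨hc, hp0⟩)))
  unfold gelfandWidth
  apply le_ciInf
  intro A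
  obtain ⟨y, hyne, hyker⟩ := exists_kernel_vec hmN A
  -- normalize y to have unit p-quasinorm
  set s : ℝ := ∑ j, |y j| ^ p with hs_def
  have hs0 : 0 < s := by
    obtain ⟨j, hj⟩ := Function.ne_iff.1 hyne
    exact Finset.sum_pos' (fun j _ => Real.rpow_nonneg (abs_nonneg _) p)
      ⟨j, Finset.mem_univ j, Real.rpow_pos_of_pos (abs_pos.2 hj) p⟩
  set t : ℝ := s ^ (1/p) with ht_def
  have ht0 : 0 < t := Real.rpow_pos_of_pos hs0 _
  set u : Fin (m+1) → ℝ := t⁻¹ • y with hu_def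
  set v : Fin N → ℝ := extZero hmN u with hv_def
  have hsum_u : ∑ j, |u j| ^ p = 1 := by
    have h1 : ∀ j, |u j| ^ p = t⁻¹ ^ p * |y j| ^ p := by
      intro j
      rw [hu_def, Pi.smul_apply, smul_eq_mul, abs_mul, abs_inv,
        abs_of_pos ht0, Real.mul_rpow (by positivity) (abs_nonneg _)]
    have h2 : t⁻¹ ^ p = s⁻¹ := by
      rw [Real.inv_rpow ht0.le, ht_def, ← Real.rpow_mul hs0.le,
        one_div_mul_cancel hp, Real.rpow_one]
    rw [Finset.sum_congr rfl (fun j _ => h1 j), ← Finset.mul_sum, ← hs_def, h2,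
      inv_mul_cancel₀ hs0.ne']
  -- v is in the constraint set
  have hv_ball : pnorm p v ≤ 1 := by
    unfold pnorm
    rw [hv_def, sum_extZero hmN (fun a => |a| ^ p) (by simp [Real.zero_rpow hp]) u,
      hsum_u, Real.one_rpow]
  have hv_ker : A.mulVec v = 0 := by
    have : v = t⁻¹ • (extZero hmN y) := by rw [hv_def, hu_def, map_smul]
    rw [this, Matrix.mulVec_smul, hyker, smul_zero]
  have hvmem : lpnorm q v ∈
      lpnorm q '' {w | w ∈ {x : Fin N → ℝ | pnorm p x ≤ 1} ∧ A.mulVec w = 0} :=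
    ⟨v, ⟨hv_ball, hv_ker⟩, rfl⟩
  -- the set is bounded above
  have hbdd : BddAbove
      (lpnorm q '' {w | w ∈ {x : Fin N → ℝ | pnorm p x ≤ 1} ∧ A.mulVec w = 0}) := by
    refine ⟨max 1 ((N:ℝ) ^ (1 / q.toReal)), ?_⟩
    rintro z ⟨x, ⟨hx1, _⟩, rfl⟩
    unfold lpnorm
    split_ifs with h
    · exact le_max_of_le_left (ciSup_le (fun i => habs x hx1 i))
    · refine le_max_of_le_right (Real.rpow_le_rpow (by positivity) ?_ (by positivity))
      calc ∑ i, |x i| ^ q.toReal ≤ ∑ _i : Fin N, (1:ℝ) :=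
            Finset.sum_le_sum (fun i _ =>
              Real.rpow_le_one (abs_nonneg _) (habs x hx1 i) ENNReal.toReal_nonneg)
        _ = (N:ℝ) := by simp
  refine le_trans ?_ (le_csSup hbdd hvmem)
  -- main estimate: lower bound on lpnorm q v
  by_cases hqt : q = ⊤
  · -- q = ∞
    subst hqt
    simp only [ENNReal.inv_top, ENNReal.toReal_zero, sub_zero]
    -- find a coordinate with |u j|^p ≥ 1/(m+1)
    have hconst : ∑ _j : Fin (m+1), (1/((m:ℝ)+1)) ≤ ∑ j, |u j| ^ p := by
      rw [hsum_u, Finset.sum_const, Finset.card_fin, nsmul_eq_mul]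
      push_cast
      rw [mul_one_div, div_self hM0.ne']
    obtain ⟨j, _, hj⟩ := Finset.exists_le_of_sum_le Finset.univ_nonempty hconst
    have hj2 : (1/((m:ℝ)+1)) ^ (1/p) ≤ |u j| := by
      have h3 : (1/((m:ℝ)+1)) ^ (1/p) ≤ (|u j| ^ p) ^ (1/p) :=
        Real.rpow_le_rpow (by positivity) hj (by positivity)
      rwa [← Real.rpow_mul (abs_nonneg _), mul_one_div, div_self hp,
        Real.rpow_one] at h3
    have hvi : v (Fin.castLE hmN j) = u j := by
      simp only [hv_def, extZero, LinearMap.coe_mk, AddHom.coe_mk, Fin.coe_castLE]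
      rw [dif_pos j.isLt]
    have hsup : |v (Fin.castLE hmN j)| ≤ ⨆ k, |v k| :=
      le_ciSup (f := fun k => |v k|) (Set.Finite.bddAbove (Set.finite_range _))
        (Fin.castLE hmN j)
    unfold lpnorm
    rw [if_pos rfl]
    calc (1/((m:ℝ)+1)) ^ (1/p) ≤ |u j| := hj2
      _ = |v (Fin.castLE hmN j)| := by rw [hvi]
      _ ≤ ⨆ k, |v k| := hsup
  · -- q finite
    set r : ℝ := q.toReal with hr_def
    have hpr : p < r := by
      have h4 := (ENNReal.toReal_lt_toReal ENNReal.ofReal_ne_top hqt).2 hq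
      rwa [ENNReal.toReal_ofReal hp0.le] at h4
    have hr0 : 0 < r := lt_trans hp0 hpr
    have hqinv : (q⁻¹).toReal = r⁻¹ := by rw [ENNReal.toReal_inv]
    rw [hqinv]
    unfold lpnorm
    rw [if_neg hqt, hv_def,
      sum_extZero hmN (fun a => |a| ^ r) (by simp [Real.zero_rpow hr0.ne']) u]
    -- Jensen's inequality
    have hjensen := Real.rpow_arith_mean_le_arith_mean_rpow Finset.univ
      (fun _ : Fin (m+1) => 1/((m:ℝ)+1)) (fun j => |u j| ^ p)
      (fun j _ => by positivity)
      (by rw [Finset.sum_const, Finset.card_fin, nsmul_eq_mul]; push_cast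
          rw [mul_one_div, div_self hM0.ne'])
      (fun j _ => Real.rpow_nonneg (abs_nonneg _) p)
      (p := r/p) ((one_le_div hp0).2 hpr.le)
    rw [← Finset.mul_sum, hsum_u, mul_one] at hjensen
    have hz : ∀ j : Fin (m+1), (|u j| ^ p) ^ (r/p) = |u j| ^ r := by
      intro j
      rw [← Real.rpow_mul (abs_nonneg _), mul_div_cancel₀ r hp]
    rw [Finset.sum_congr rfl (fun j _ => by rw [hz j]), ← Finset.mul_sum] at hjensen
    -- so ∑ |u j|^r ≥ (1/(m+1))^(r/p - 1)
    have hsum_r : (1/((m:ℝ)+1)) ^ (r/p - 1) ≤ ∑ j, |u j| ^ r := by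
      have h5 : ((m:ℝ)+1) * (1/((m:ℝ)+1)) ^ (r/p) ≤ ∑ j, |u j| ^ r := by
        have := mul_le_mul_of_nonneg_left hjensen (le_of_lt hM0)
        rwa [← mul_assoc, mul_one_div, div_self hM0.ne', one_mul] at this
      have h6 : (1/((m:ℝ)+1)) ^ (r/p - 1) = ((m:ℝ)+1) * (1/((m:ℝ)+1)) ^ (r/p) := by
        rw [Real.rpow_sub (by positivity), Real.rpow_one]
        field_simp
        try ring
      rw [h6]; exact h5
    calc (1/((m:ℝ)+1)) ^ (1/p - r⁻¹)
        = ((1/((m:ℝ)+1)) ^ (r/p - 1)) ^ (1/r) := by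
          rw [← Real.rpow_mul (by positivity)]
          congr 1
          field_simp
          try ring
      _ ≤ (∑ j, |u j| ^ r) ^ (1/r) :=
          Real.rpow_le_rpow (by positivity) hsum_r (by positivity)
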